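/- Let F = {f_i}_{i=1}^N be a tight frame with frame bound A for H, {q_i} positive weights, and 0 ≤ λ < 1. If there is a constant c with q_i‖f_i‖² = c for all i, then the canonical dual S_F^{-1}F = {f_i/A} is the unique minimizer among all duals G of F of the quantity max_{1≤i≤N} q_i(λ|⟨f_i, g_i⟩| + (1−λ)‖f_i‖‖g_i‖). -/

import Mathlib

open scoped InnerProductSpace

section Aux

variable {H : Type*} [NormedAddCommGroup H] [InnerProductSpace ℂ H]

private lemma aux_smul_left (r : ℝ) (x y : H) : ⟪r • x, y⟫_ℂ = (r:ℂ) * ⟪x, y⟫_ℂ := by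
  rw [show r • x = (r:ℂ) • x from (Complex.coe_smul r x).symm, inner_smul_left]
  simp

private lemma aux_smul_right (r : ℝ) (x y : H) : ⟪x, r • y⟫_ℂ = (r:ℂ) * ⟪x, y⟫_ℂ := by
  rw [show r • y = (r:ℂ) • y from (Complex.coe_smul r y).symm, inner_smul_right]

private lemma aux_re_symm (x y : H) : (⟪x, y⟫_ℂ).re = (⟪y, x⟫_ℂ).re := by
  rw [← inner_conj_symm x y, Complex.conj_re]

end Aux

/-- For a tight frame with `q_i‖f_i‖² = c` constant and `0 ≤ t < 1`, the
canonical dual `{f_i/A}` is the unique minimizer of the averaged measure among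
all dual frames. -/
theorem stmt_13 {H : Type*} [NormedAddCommGroup H] [InnerProductSpace ℂ H]
    [FiniteDimensional ℂ H] {N : ℕ} [NeZero N]
    (f : Fin N → H) (q : Fin N → ℝ) (A c : ℝ) (hA : 0 < A)
    (htight : ∀ x : H, ∑ i, ⟪f i, x⟫_ℂ • f i = A • x)
    (hq : ∀ i, 0 < q i) (hc : ∀ i, q i * ‖f i‖ ^ 2 = c)
    (t : ℝ) (ht0 : 0 ≤ t) (ht1 : t < 1) :
    let η : (Fin N → H) → ℝ := fun g => Finset.univ.sup' Finset.univ_nonempty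
      (fun i => q i * (t * ‖⟪f i, g i⟫_ℂ‖ + (1 - t) * ‖f i‖ * ‖g i‖))
    let g0 : Fin N → H := fun i => A⁻¹ • f i
    (∀ x : H, ∑ i, ⟪g0 i, x⟫_ℂ • f i = x) ∧
    ∀ g : Fin N → H, (∀ x : H, ∑ i, ⟪g i, x⟫_ℂ • f i = x) →
      (η g0 ≤ η g ∧ (η g = η g0 → g = g0)) := by
  intro η g0
  have hA0 : A ≠ 0 := hA.ne'
  have hAc : (A:ℂ) ≠ 0 := by exact_mod_cast hA0
  have hg0def : ∀ i, g0 i = A⁻¹ • f i := fun _ => rfl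
  -- norms and inner products involving g0
  have hg0norm : ∀ i, ‖g0 i‖ = A⁻¹ * ‖f i‖ := by
    intro i
    rw [hg0def, norm_smul, Real.norm_eq_abs, abs_of_pos (inv_pos.2 hA)]
  have hfg0 : ∀ i, ⟪f i, g0 i⟫_ℂ = ((A⁻¹ * ‖f i‖^2 : ℝ) : ℂ) := by
    intro i
    rw [hg0def, aux_smul_right, inner_self_eq_norm_sq_to_K]
    push_cast
    exact rfl
  have hnormfg0 : ∀ i, ‖⟪f i, g0 i⟫_ℂ‖ = A⁻¹ * ‖f i‖^2 := by
    intro i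
    rw [hfg0, Complex.norm_real, Real.norm_eq_abs, abs_of_nonneg]
    positivity
  have hterm0 : ∀ i, q i * (t * ‖⟪f i, g0 i⟫_ℂ‖ + (1 - t) * ‖f i‖ * ‖g0 i‖) = c / A := by
    intro i
    rw [hnormfg0, hg0norm]
    rw [← hc i, div_eq_mul_inv]
    ring
  have hη0 : η g0 = c / A := by
    show Finset.univ.sup' Finset.univ_nonempty
      (fun i => q i * (t * ‖⟪f i, g0 i⟫_ℂ‖ + (1 - t) * ‖f i‖ * ‖g0 i‖)) = c / A
    rw [show (fun i => q i * (t * ‖⟪f i, g0 i⟫_ℂ‖ + (1 - t) * ‖f i‖ * ‖g0 i‖))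
        = (fun _ : Fin N => c / A) from funext hterm0]
    exact Finset.sup'_const _ _
  -- g0 is a dual
  have hdual0 : ∀ x : H, ∑ i, ⟪g0 i, x⟫_ℂ • f i = x := by
    intro x
    have h1 : ∑ i, ⟪g0 i, x⟫_ℂ • f i = (A⁻¹ : ℂ) • ∑ i, ⟪f i, x⟫_ℂ • f i := by
      rw [Finset.smul_sum]
      refine Finset.sum_congr rfl fun i _ => ?_
      rw [hg0def, aux_smul_left, Complex.ofReal_inv, mul_smul]
    rw [h1, htight x, show (A:ℝ) • x = ((A:ℂ)) • x from (Complex.coe_smul A x).symm,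
      smul_smul]
    rw [inv_mul_cancel₀ hAc, one_smul]
  refine ⟨hdual0, ?_⟩
  intro g hg
  -- the trace identity
  have htr : ((∑ i, ‖f i‖^2 : ℝ) : ℂ) = (A:ℂ) * ∑ j, ⟪g j, f j⟫_ℂ := by
    have step1 : ∀ j, (A:ℂ) * ⟪g j, f j⟫_ℂ = ∑ i, ⟪f i, f j⟫_ℂ * ⟪g j, f i⟫_ℂ := by
      intro j
      rw [← aux_smul_right A (g j) (f j), ← htight (f j), inner_sum]
      simp_rw [inner_smul_right]
    have step2 : ∀ i, ((‖f i‖^2 : ℝ) : ℂ) = ∑ j, ⟪g j, f i⟫_ℂ * ⟪f i, f j⟫_ℂ := by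
      intro i
      calc ((‖f i‖^2 : ℝ) : ℂ) = ⟪f i, f i⟫_ℂ := by
            rw [inner_self_eq_norm_sq_to_K]; push_cast; exact rfl
        _ = ⟪f i, ∑ j, ⟪g j, f i⟫_ℂ • f j⟫_ℂ := by rw [hg (f i)]
        _ = ∑ j, ⟪g j, f i⟫_ℂ * ⟪f i, f j⟫_ℂ := by
            rw [inner_sum]; simp_rw [inner_smul_right]
    calc ((∑ i, ‖f i‖^2 : ℝ) : ℂ) = ∑ i, ((‖f i‖^2 : ℝ) : ℂ) := by push_cast; rfl
      _ = ∑ i, ∑ j, ⟪g j, f i⟫_ℂ * ⟪f i, f j⟫_ℂ := Finset.sum_congr rfl fun i _ => step2 i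
      _ = ∑ j, ∑ i, ⟪f i, f j⟫_ℂ * ⟪g j, f i⟫_ℂ := by
          rw [Finset.sum_comm]
          exact Finset.sum_congr rfl fun j _ => Finset.sum_congr rfl fun i _ => mul_comm _ _
      _ = ∑ j, (A:ℂ) * ⟪g j, f j⟫_ℂ := Finset.sum_congr rfl fun j _ => (step1 j).symm
      _ = (A:ℂ) * ∑ j, ⟪g j, f j⟫_ℂ := (Finset.mul_sum _ _ _).symm
  have htrR : ∑ i, (⟪f i, g i⟫_ℂ).re = A⁻¹ * ∑ i, ‖f i‖^2 := by
    have h2 : (∑ j, ⟪g j, f j⟫_ℂ) = (((A⁻¹ * ∑ i, ‖f i‖^2 : ℝ)) : ℂ) := by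
      apply mul_left_cancel₀ hAc
      rw [← htr]
      push_cast
      field_simp
    calc ∑ i, (⟪f i, g i⟫_ℂ).re = ∑ i, (⟪g i, f i⟫_ℂ).re :=
          Finset.sum_congr rfl fun i _ => aux_re_symm _ _
      _ = (∑ j, ⟪g j, f j⟫_ℂ).re := (Complex.re_sum _ _).symm
      _ = A⁻¹ * ∑ i, ‖f i‖^2 := by rw [h2, Complex.ofReal_re]
  -- each term bounds q i * re from above, hence η g bounds it
  have hkey : ∀ i, q i * (⟪f i, g i⟫_ℂ).re ≤ η g := by
    intro i
    have h1 : (⟪f i, g i⟫_ℂ).re ≤ ‖⟪f i, g i⟫_ℂ‖ := Complex.re_le_norm _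
    have h2 : ‖⟪f i, g i⟫_ℂ‖ ≤ ‖f i‖ * ‖g i‖ := norm_inner_le_norm _ _
    have h3 : q i * (⟪f i, g i⟫_ℂ).re
        ≤ q i * (t * ‖⟪f i, g i⟫_ℂ‖ + (1 - t) * ‖f i‖ * ‖g i‖) := by
      nlinarith [mul_nonneg (mul_nonneg (hq i).le ht0) (sub_nonneg.2 h1),
        mul_nonneg (mul_nonneg (hq i).le (sub_nonneg.2 ht1.le)) (sub_nonneg.2 (h1.trans h2))]
    refine h3.trans ?_
    exact Finset.le_sup' (fun i => q i * (t * ‖⟪f i, g i⟫_ℂ‖ + (1 - t) * ‖f i‖ * ‖g i‖))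
      (Finset.mem_univ i)
  -- minimality
  have hmin : c / A ≤ η g := by
    by_contra hcon
    push_neg at hcon
    have hlt : ∀ i, (⟪f i, g i⟫_ℂ).re < A⁻¹ * ‖f i‖^2 := by
      intro i
      have h2 : q i * (⟪f i, g i⟫_ℂ).re < c / A := lt_of_le_of_lt (hkey i) hcon
      rw [← hc i, div_eq_mul_inv] at h2
      nlinarith [hq i]
    have hsum : ∑ i, (⟪f i, g i⟫_ℂ).re < ∑ i, A⁻¹ * ‖f i‖^2 :=
      Finset.sum_lt_sum_of_nonempty Finset.univ_nonempty fun i _ => hlt i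
    rw [← Finset.mul_sum, ← htrR] at hsum
    exact lt_irrefl _ hsum
  refine ⟨hη0 ▸ hmin, ?_⟩
  -- uniqueness
  intro hEq
  have hEq' : η g = c / A := by rw [hEq, hη0]
  by_cases hc0 : c = 0
  · -- degenerate case: H is trivial
    have hf0 : ∀ i, f i = 0 := by
      intro i
      have h := hc i
      rw [hc0] at h
      have h2 : ‖f i‖ ^ 2 = 0 := by
        rcases mul_eq_zero.mp h with h' | h'
        · exact absurd h' (hq i).ne'
        · exact h'
      simpa [pow_eq_zero_iff] using h2
    have hx0 : ∀ x : H, x = 0 := by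
      intro x
      have h := htight x
      simp only [hf0, smul_zero, Finset.sum_const_zero] at h
      rcases smul_eq_zero.mp h.symm with h' | h'
      · exact absurd h' hA0
      · exact h'
    funext i
    exact (hx0 _).trans (hx0 _).symm
  · have i0 : Fin N := ⟨0, Nat.pos_of_ne_zero (NeZero.ne N)⟩
    have hcpos : 0 < c := by
      have h1 : 0 ≤ c := (hc i0) ▸ mul_nonneg (hq i0).le (sq_nonneg _)
      exact lt_of_le_of_ne h1 (Ne.symm hc0)
    have hfpos : ∀ i, 0 < ‖f i‖ := by
      intro i
      rcases eq_or_lt_of_le (norm_nonneg (f i)) with h | h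
      · exfalso
        have h2 := hc i
        rw [← h] at h2
        simp at h2
        exact hc0 h2.symm
      · exact h
    have hterm_le : ∀ i, q i * (t * ‖⟪f i, g i⟫_ℂ‖ + (1 - t) * ‖f i‖ * ‖g i‖) ≤ c / A := by
      intro i
      rw [← hEq']
      exact Finset.le_sup' (fun i => q i * (t * ‖⟪f i, g i⟫_ℂ‖ + (1 - t) * ‖f i‖ * ‖g i‖))
        (Finset.mem_univ i)
    have hre_le : ∀ i, (⟪f i, g i⟫_ℂ).re ≤ A⁻¹ * ‖f i‖^2 := by
      intro i
      have h2 : q i * (⟪f i, g i⟫_ℂ).re ≤ c / A := (hkey i).trans hEq'.le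
      rw [← hc i, div_eq_mul_inv] at h2
      nlinarith [hq i]
    have hre_eq : ∀ i, (⟪f i, g i⟫_ℂ).re = A⁻¹ * ‖f i‖^2 := by
      have hsum : ∑ i, (⟪f i, g i⟫_ℂ).re = ∑ i, A⁻¹ * ‖f i‖^2 := by
        rw [htrR, Finset.mul_sum]
      intro i
      exact (Finset.sum_eq_sum_iff_of_le fun i _ => hre_le i).mp hsum i (Finset.mem_univ i)
    have hnorm_le : ∀ i, ‖g i‖ ≤ A⁻¹ * ‖f i‖ := by
      intro i
      have h1 := hterm_le i
      have h2 : A⁻¹ * ‖f i‖^2 ≤ ‖⟪f i, g i⟫_ℂ‖ := (hre_eq i) ▸ Complex.re_le_norm _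
      rw [← hc i, div_eq_mul_inv] at h1
      have key : (q i * (1 - t) * ‖f i‖) * ‖g i‖ ≤ (q i * (1 - t) * ‖f i‖) * (A⁻¹ * ‖f i‖) := by
        nlinarith [h1, mul_le_mul_of_nonneg_left h2 (mul_nonneg (hq i).le ht0)]
      have hpos : 0 < q i * (1 - t) * ‖f i‖ :=
        mul_pos (mul_pos (hq i) (sub_pos.2 ht1)) (hfpos i)
      exact (mul_le_mul_iff_right₀ hpos).mp key
    funext i
    have hip : (⟪g i, g0 i⟫_ℂ).re = A⁻¹ * (A⁻¹ * ‖f i‖^2) := by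
      rw [hg0def, aux_smul_right]
      have : ((A⁻¹ : ℝ) : ℂ).im = 0 := by simp
      rw [Complex.mul_re, Complex.ofReal_re, Complex.ofReal_im]
      rw [aux_re_symm (g i) (f i), hre_eq i]
      ring
    have hexp : ‖g i - g0 i‖^2 = ‖g i‖^2 - 2 * (⟪g i, g0 i⟫_ℂ).re + ‖g0 i‖^2 := by
      have := @norm_sub_sq ℂ H _ _ _ (g i) (g0 i)
      simpa using this
    have hns : ‖g i - g0 i‖^2 ≤ 0 := by
      rw [hexp, hip, hg0norm i]
      nlinarith [hnorm_le i, norm_nonneg (g i), mul_nonneg (inv_pos.2 hA).le (norm_nonneg (f i))]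
    have h0 : ‖g i - g0 i‖^2 = 0 := le_antisymm hns (sq_nonneg _)
    have : ‖g i - g0 i‖ = 0 := by
      exact pow_eq_zero_iff (two_ne_zero) |>.mp h0
    exact sub_eq_zero.mp (norm_eq_zero.mp this)
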